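/- With m̄ as above (assuming sup_x H(x) ≥ 0 for all admissible H), m̄ is Γ-invariant: m̄(γ·f) = m̄(f) for every γ ∈ Γ and f ∈ ℓ∞(X), where (γ·f)(x) = f(γ⁻¹x). -/
import Mathlib

open BoundedContinuousFunction

/-- The left-regular lregTranslate of a bounded function: `(γ · f)(x) = f(γ⁻¹ • x)`. -/
noncomputable def lregTranslate {Γ X : Type*} [Group Γ] [MulAction Γ X]
    [TopologicalSpace X] [DiscreteTopology X] (γ : Γ) (f : X →ᵇ ℝ) : X →ᵇ ℝ :=
  f.compContinuous ⟨fun x => γ⁻¹ • x, continuous_of_discreteTopology⟩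

/-- A `Γ`-invariant mean on `ℓ∞(X)`: a positive linear functional with `m 1 = 1`
invariant under the left-regular action. -/
structure InvariantMean (Γ X : Type*) [Group Γ] [MulAction Γ X]
    [TopologicalSpace X] [DiscreteTopology X] where
  toFun : (X →ᵇ ℝ) →ₗ[ℝ] ℝ
  nonneg : ∀ f : X →ᵇ ℝ, (∀ x, 0 ≤ f x) → 0 ≤ toFun f
  map_one : toFun 1 = 1
  invariant : ∀ (γ : Γ) (f : X →ᵇ ℝ), toFun (lregTranslate γ f) = toFun f


/-- Admissible functions: finite sums `Σᵢ (hᵢ − γᵢ·hᵢ)` with `hᵢ ∈ ℓ∞(X)`, `γᵢ ∈ Γ`. -/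
def Admissible (Γ : Type*) {X : Type*} [Group Γ] [MulAction Γ X]
    [TopologicalSpace X] [DiscreteTopology X] (H : X →ᵇ ℝ) : Prop :=
  ∃ (n : ℕ) (h : Fin n → (X →ᵇ ℝ)) (g : Fin n → Γ),
    H = ∑ i, (h i - lregTranslate (g i) (h i))

/-- `m̄(f) = inf_H sup_x (f(x) + H(x))`, the infimum over all admissible `H`. -/
noncomputable def mbar (Γ : Type*) {X : Type*} [Group Γ] [MulAction Γ X]
    [TopologicalSpace X] [DiscreteTopology X] (f : X →ᵇ ℝ) : ℝ :=
  ⨅ H : {H : X →ᵇ ℝ // Admissible Γ H}, ⨆ x : X, (f x + (H : X →ᵇ ℝ) x)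

lemma lregTranslate_apply {Γ X : Type*} [Group Γ] [MulAction Γ X]
    [TopologicalSpace X] [DiscreteTopology X] (γ : Γ) (f : X →ᵇ ℝ) (x : X) :
    lregTranslate γ f x = f (γ⁻¹ • x) := rfl

lemma lregTranslate_inv {Γ X : Type*} [Group Γ] [MulAction Γ X]
    [TopologicalSpace X] [DiscreteTopology X] (γ : Γ) (f : X →ᵇ ℝ) :
    lregTranslate γ⁻¹ (lregTranslate γ f) = f := by
  ext x
  simp [lregTranslate_apply]

lemma admissible_add {Γ X : Type*} [Group Γ] [MulAction Γ X]
    [TopologicalSpace X] [DiscreteTopology X] {H K : X →ᵇ ℝ}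
    (hH : Admissible Γ H) (hK : Admissible Γ K) : Admissible Γ (H + K) := by
  obtain ⟨n, h, g, rfl⟩ := hH
  obtain ⟨m, h', g', rfl⟩ := hK
  refine ⟨n + m, Fin.addCases h h', Fin.addCases g g', ?_⟩
  rw [Fin.sum_univ_add]
  simp

lemma admissible_sub_self {Γ X : Type*} [Group Γ] [MulAction Γ X]
    [TopologicalSpace X] [DiscreteTopology X] (γ : Γ) (f : X →ᵇ ℝ) :
    Admissible Γ (lregTranslate γ f - f) := by
  refine ⟨1, fun _ => lregTranslate γ f, fun _ => γ⁻¹, ?_⟩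
  simp [lregTranslate_inv]

lemma bddAbove_range_add {X : Type*} [Nonempty X]
    [TopologicalSpace X] (f H : X →ᵇ ℝ) :
    BddAbove (Set.range fun x => f x + H x) := by
  refine ⟨‖f‖ + ‖H‖, ?_⟩
  rintro y ⟨x, rfl⟩
  have h1 : f x ≤ ‖f‖ := (abs_le.mp (f.norm_coe_le_norm x)).2
  have h2 : H x ≤ ‖H‖ := (abs_le.mp (H.norm_coe_le_norm x)).2
  exact add_le_add h1 h2

lemma mbar_bddBelow {Γ X : Type*} [Group Γ] [MulAction Γ X] [Nonempty X]
    [TopologicalSpace X] [DiscreteTopology X]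
    (hpos : ∀ H : X →ᵇ ℝ, Admissible Γ H → 0 ≤ ⨆ x : X, H x) (f : X →ᵇ ℝ) :
    BddBelow (Set.range fun H : {H : X →ᵇ ℝ // Admissible Γ H} =>
      ⨆ x : X, (f x + (H : X →ᵇ ℝ) x)) := by
  refine ⟨-‖f‖, ?_⟩
  rintro y ⟨⟨H, hH⟩, rfl⟩
  have hsup : (⨆ x : X, H x) ≤ (⨆ x : X, (f x + H x)) + ‖f‖ := by
    refine ciSup_le fun x => ?_
    have h1 : f x + H x ≤ ⨆ x : X, (f x + H x) :=
      le_ciSup (bddAbove_range_add f H) x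
    have h2 : -‖f‖ ≤ f x := (abs_le.mp (f.norm_coe_le_norm x)).1
    linarith
  have := hpos H hH
  simp only
  linarith

lemma mbar_le {Γ X : Type*} [Group Γ] [MulAction Γ X] [Nonempty X]
    [TopologicalSpace X] [DiscreteTopology X]
    (hpos : ∀ H : X →ᵇ ℝ, Admissible Γ H → 0 ≤ ⨆ x : X, H x)
    (γ : Γ) (f : X →ᵇ ℝ) :
    mbar Γ f ≤ mbar Γ (lregTranslate γ f) := by
  have : Nonempty {H : X →ᵇ ℝ // Admissible Γ H} :=
    ⟨⟨0, 0, Fin.elim0, Fin.elim0, by simp⟩⟩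
  refine le_ciInf fun ⟨H, hH⟩ => ?_
  have hadm : Admissible Γ ((lregTranslate γ f - f) + H) :=
    admissible_add (admissible_sub_self γ f) hH
  have hle : mbar Γ f ≤ ⨆ x : X, (f x + ((lregTranslate γ f - f) + H) x) :=
    ciInf_le (mbar_bddBelow hpos f) ⟨_, hadm⟩
  refine hle.trans_eq ?_
  congr 1
  ext x
  simp only [BoundedContinuousFunction.add_apply, BoundedContinuousFunction.sub_apply]
  ring

/-- `m̄` is `Γ`-invariant: `m̄(γ·f) = m̄(f)`. -/
theorem mbar_invariant {Γ X : Type*} [Group Γ] [MulAction Γ X] [Nonempty X]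
    [TopologicalSpace X] [DiscreteTopology X]
    (hpos : ∀ H : X →ᵇ ℝ, Admissible Γ H → 0 ≤ ⨆ x : X, H x)
    (γ : Γ) (f : X →ᵇ ℝ) :
    mbar Γ (lregTranslate γ f) = mbar Γ f := by
  refine le_antisymm ?_ (mbar_le hpos γ f)
  have := mbar_le hpos γ⁻¹ (lregTranslate γ f)
  rwa [lregTranslate_inv] at this
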